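/- One has √σ₁₁·(x_max − x_min)·sin β = √σ₂₂·(y_max − y_min)·sin β = 2·√((σ₂₂μ₁² − 2σ₁₂μ₁μ₂ + σ₁₁μ₂²)/detΣ). (The right-hand side equals 2√(μᵀΣ⁻¹μ) for μ = (μ₁, μ₂), i.e. twice the norm of the transformed drift.) -/

import Mathlib

open Real

theorem stmt9
    (σ11 σ12 σ22 μ1 μ2 : ℝ)
    (hσ11 : 0 < σ11) (hσ22 : 0 < σ22)
    (hdet : 0 < σ11 * σ22 - σ12 ^ 2)
    (hμ1 : 0 < μ1) (hμ2 : 0 < μ2)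
    (detS D1 D2 xmin xmax ymin ymax β : ℝ)
    (hdetS : detS = σ11 * σ22 - σ12 ^ 2)
    (hD1 : D1 = (μ2 * σ12 - μ1 * σ22) ^ 2 + μ2 ^ 2 * detS)
    (hxmin : xmin = (μ2 * σ12 - μ1 * σ22 - Real.sqrt D1) / detS)
    (hxmax : xmax = (μ2 * σ12 - μ1 * σ22 + Real.sqrt D1) / detS)
    (hD2 : D2 = (μ1 * σ12 - μ2 * σ11) ^ 2 + μ1 ^ 2 * detS)
    (hymin : ymin = (μ1 * σ12 - μ2 * σ11 - Real.sqrt D2) / detS)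
    (hymax : ymax = (μ1 * σ12 - μ2 * σ11 + Real.sqrt D2) / detS)
    (hβ : β = Real.arccos (-σ12 / Real.sqrt (σ11 * σ22))) :
    Real.sqrt σ11 * (xmax - xmin) * Real.sin β =
      2 * Real.sqrt ((σ22 * μ1 ^ 2 - 2 * σ12 * μ1 * μ2 + σ11 * μ2 ^ 2) / detS) ∧
    Real.sqrt σ22 * (ymax - ymin) * Real.sin β =
      2 * Real.sqrt ((σ22 * μ1 ^ 2 - 2 * σ12 * μ1 * μ2 + σ11 * μ2 ^ 2) / detS) := by
  set Q := σ22 * μ1 ^ 2 - 2 * σ12 * μ1 * μ2 + σ11 * μ2 ^ 2 with hQ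
  have hdetS0 : 0 < detS := by rw [hdetS]; exact hdet
  have hQ0 : 0 ≤ Q := by
    nlinarith [sq_nonneg (σ22 * μ1 - σ12 * μ2), sq_nonneg μ2, hdet, hμ2.le, hσ22]
  have h1122 : 0 < σ11 * σ22 := mul_pos hσ11 hσ22
  -- sin β
  have hsin : Real.sin β = Real.sqrt detS / (Real.sqrt σ11 * Real.sqrt σ22) := by
    rw [hβ, Real.sin_arccos]
    have : 1 - (-σ12 / Real.sqrt (σ11 * σ22)) ^ 2 = detS / (σ11 * σ22) := by
      rw [div_pow, neg_pow, Real.sq_sqrt h1122.le, hdetS]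
      field_simp
    rw [this, Real.sqrt_div hdetS0.le, Real.sqrt_mul hσ11.le]
  have hD1' : Real.sqrt D1 = Real.sqrt σ22 * Real.sqrt Q := by
    rw [← Real.sqrt_mul hσ22.le]
    congr 1
    rw [hD1, hQ, hdetS]; ring
  have hD2' : Real.sqrt D2 = Real.sqrt σ11 * Real.sqrt Q := by
    rw [← Real.sqrt_mul hσ11.le]
    congr 1
    rw [hD2, hQ, hdetS]; ring
  have hs11 : Real.sqrt σ11 > 0 := Real.sqrt_pos.2 hσ11
  have hs22 : Real.sqrt σ22 > 0 := Real.sqrt_pos.2 hσ22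
  have hsd : Real.sqrt detS > 0 := Real.sqrt_pos.2 hdetS0
  have hdd : Real.sqrt detS * Real.sqrt detS = detS := Real.mul_self_sqrt hdetS0.le
  have hRHS : Real.sqrt (Q / detS) = Real.sqrt Q / Real.sqrt detS := Real.sqrt_div hQ0 _
  constructor
  · rw [hxmax, hxmin, hsin, hD1', div_sub_div_same]
    rw [hRHS]; field_simp
    linear_combination (2 * Real.sqrt σ22 * Real.sqrt Q) * hdd
  · rw [hymax, hymin, hsin, hD2', div_sub_div_same]
    rw [hRHS]; field_simp
    linear_combination (2 * Real.sqrt σ11 * Real.sqrt Q) * hdd
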